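/- Let n ∈ {3,4}; let r₁,…,r_{n−1} ∈ ℚ with 0 < r₁ ≤ ⋯ ≤ r_{n−1} < 1; let r_n, q_n ∈ ℚ with 0 < r_n < q_n ≤ 1 and r₂ < q_n. Let M be a common denominator of r₁,…,r_n, q_n and let p be a prime with p ≡ 1 (mod M); set k₀ := (p−1)r_n, a positive integer. Then both sums below are p-adic integers and, in ℤ_p, Σ_{i=0}^{k₀} [((1−p)r_n)_i · (r₁)_i⋯(r_{n−1})_i] / [(q_n − p·r_n)_i · (i!)^{n−1}] ≡ Σ_{i=0}^{p−1} [(r_n)_i · (r₁)_i⋯(r_{n−1})_i] / [(q_n)_i · (i!)^{n−1}] (mod p·ℤ_p). -/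

import Mathlib

open scoped BigOperators

noncomputable section

/-- The rising factorial (Pochhammer symbol) `(a)_k` for a rational `a`. -/
def poch (a : ℚ) (k : ℕ) : ℚ := Polynomial.eval a (ascPochhammer ℚ k)

namespace TSCAux

lemma poch_zero (a : ℚ) : poch a 0 = 1 := by simp [poch]

lemma poch_succ (a : ℚ) (k : ℕ) : poch a (k+1) = poch a k * (a + k) := by
  simp [poch, ascPochhammer_succ_eval]

lemma poch_eq_prod (a : ℚ) (k : ℕ) : poch a k = ∏ j ∈ Finset.range k, (a + j) := by
  induction k with
  | zero => simp [poch_zero]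
  | succ k ih => rw [poch_succ, ih, Finset.prod_range_succ]

variable {p : ℕ} [Fact p.Prime]

lemma poch_cast (a : ℚ) (k : ℕ) :
    ((poch a k : ℚ) : ℚ_[p]) = ∏ j ∈ Finset.range k, ((a : ℚ_[p]) + j) := by
  rw [poch_eq_prod]
  push_cast
  rfl

lemma norm_nat_le_one (j : ℕ) : ‖((j : ℕ) : ℚ_[p])‖ ≤ 1 := by
  have := Padic.norm_int_le_one (p := p) (j : ℤ)
  simpa using this

lemma norm_add_nat_le_one {a : ℚ_[p]} (ha : ‖a‖ ≤ 1) (j : ℕ) : ‖a + (j : ℚ_[p])‖ ≤ 1 :=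
  le_trans (Padic.nonarchimedean _ _) (max_le ha (norm_nat_le_one j))

lemma norm_sub_le_max (a b : ℚ_[p]) : ‖a - b‖ ≤ max ‖a‖ ‖b‖ := by
  have := Padic.nonarchimedean a (-b)
  simpa [sub_eq_add_neg] using this

lemma norm_int_eq_one {z : ℤ} (hz : ¬ ((p : ℤ) ∣ z)) : ‖((z : ℤ) : ℚ_[p])‖ = 1 :=
  le_antisymm (Padic.norm_int_le_one z)
    (not_lt.mp fun h => hz ((Padic.norm_intCast_lt_one_iff (k := z)).mp h))

lemma norm_eq_of_sub_lt {a b : ℚ_[p]} (h : ‖a - b‖ < ‖b‖) : ‖a‖ = ‖b‖ := by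
  have h1 : ‖a‖ ≤ ‖b‖ := by
    have : a = b + (a - b) := by ring
    rw [this]
    exact le_trans (Padic.nonarchimedean _ _) (max_le le_rfl h.le)
  refine le_antisymm h1 ?_
  have h2 : ‖b‖ ≤ max ‖a‖ ‖a - b‖ := by
    have hb : b = a - (a - b) := by ring
    calc ‖b‖ = ‖a - (a - b)‖ := by rw [← hb]
      _ ≤ max ‖a‖ ‖a - b‖ := norm_sub_le_max _ _
  rcases le_max_iff.mp h2 with h3 | h3
  · exact h3
  · exact absurd (lt_of_le_of_lt h3 h) (lt_irrefl _)

lemma norm_sum_le_of_le {c : ℝ} (hc : 0 ≤ c) (s : Finset ℕ) (f : ℕ → ℚ_[p])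
    (h : ∀ i ∈ s, ‖f i‖ ≤ c) : ‖∑ i ∈ s, f i‖ ≤ c := by
  induction s using Finset.induction with
  | empty => simpa using hc
  | insert a s hx ih =>
    rw [Finset.sum_insert hx]
    exact le_trans (Padic.nonarchimedean _ _)
      (max_le (h _ (Finset.mem_insert_self _ _))
        (ih fun i hi => h i (Finset.mem_insert_of_mem hi)))

lemma norm_prod_le_one (s : Finset ℕ) (g : ℕ → ℚ_[p]) (h : ∀ j ∈ s, ‖g j‖ ≤ 1) :
    ‖∏ j ∈ s, g j‖ ≤ 1 := by
  rw [norm_prod]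
  exact Finset.prod_le_one (fun j _ => norm_nonneg _) h

lemma norm_prod_le_of_mem {s : Finset ℕ} {g : ℕ → ℚ_[p]} {j0 : ℕ} (hj0 : j0 ∈ s)
    (hle : ∀ j ∈ s, ‖g j‖ ≤ 1) {c : ℝ} (hc : ‖g j0‖ ≤ c) : ‖∏ j ∈ s, g j‖ ≤ c := by
  rw [← Finset.mul_prod_erase _ _ hj0, norm_mul]
  have h1 : ‖∏ j ∈ s.erase j0, g j‖ ≤ 1 :=
    norm_prod_le_one _ _ (fun j hj => hle j (Finset.mem_of_mem_erase hj))
  calc ‖g j0‖ * ‖∏ j ∈ s.erase j0, g j‖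
      ≤ c * 1 := mul_le_mul hc h1 (norm_nonneg _) (le_trans (norm_nonneg _) hc)
    _ = c := mul_one c

lemma norm_poch_le_one {a : ℚ} (ha : ‖(a : ℚ_[p])‖ ≤ 1) (k : ℕ) :
    ‖((poch a k : ℚ) : ℚ_[p])‖ ≤ 1 := by
  rw [poch_cast]
  exact norm_prod_le_one _ _ (fun j _ => norm_add_nat_le_one ha j)

lemma norm_poch_le_of_factor {a : ℚ} (ha : ‖(a : ℚ_[p])‖ ≤ 1) {k j0 : ℕ} (hj0 : j0 < k)
    {c : ℝ} (hc : ‖(a : ℚ_[p]) + (j0 : ℚ_[p])‖ ≤ c) : ‖((poch a k : ℚ) : ℚ_[p])‖ ≤ c := by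
  rw [poch_cast]
  exact norm_prod_le_of_mem (Finset.mem_range.mpr hj0)
    (fun j _ => norm_add_nat_le_one ha j) hc

lemma norm_poch_eq_one {a : ℚ} {k : ℕ} (h : ∀ j, j < k → ‖(a : ℚ_[p]) + (j : ℚ_[p])‖ = 1) :
    ‖((poch a k : ℚ) : ℚ_[p])‖ = 1 := by
  rw [poch_cast, norm_prod]
  exact Finset.prod_eq_one (fun j hj => h j (Finset.mem_range.mp hj))

lemma norm_poch_sub_le {a b : ℚ} (ha : ‖(a : ℚ_[p])‖ ≤ 1) (hb : ‖(b : ℚ_[p])‖ ≤ 1) (k : ℕ) :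
    ‖((poch a k - poch b k : ℚ) : ℚ_[p])‖ ≤ ‖((a - b : ℚ) : ℚ_[p])‖ := by
  induction k with
  | zero => simp [poch_zero]
  | succ k ih =>
    have hd : ((poch a (k+1) - poch b (k+1) : ℚ) : ℚ_[p])
        = ((poch a k - poch b k : ℚ) : ℚ_[p]) * ((a : ℚ_[p]) + (k : ℚ_[p]))
          + ((poch b k : ℚ) : ℚ_[p]) * (((a - b : ℚ)) : ℚ_[p]) := by
      push_cast [poch_succ]; ring
    rw [hd]
    refine le_trans (Padic.nonarchimedean _ _) (max_le ?_ ?_)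
    · rw [norm_mul]
      calc ‖((poch a k - poch b k : ℚ) : ℚ_[p])‖ * ‖(a : ℚ_[p]) + (k : ℚ_[p])‖
          ≤ ‖((a - b : ℚ) : ℚ_[p])‖ * 1 :=
            mul_le_mul ih (norm_add_nat_le_one ha k) (norm_nonneg _) (norm_nonneg _)
        _ = ‖((a - b : ℚ) : ℚ_[p])‖ := mul_one _
    · rw [norm_mul]
      calc ‖((poch b k : ℚ) : ℚ_[p])‖ * ‖((a - b : ℚ) : ℚ_[p])‖
          ≤ 1 * ‖((a - b : ℚ) : ℚ_[p])‖ :=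
            mul_le_mul_of_nonneg_right (norm_poch_le_one hb k) (norm_nonneg _)
        _ = _ := one_mul _

lemma norm_rat_le_one {M : ℕ} (hM : 0 < M) (hMp : M < p) {x : ℚ} {z : ℤ}
    (hz : (M : ℚ) * x = z) : ‖(x : ℚ_[p])‖ ≤ 1 := by
  have hM0 : (M : ℚ) ≠ 0 := by positivity
  have hxq : x = (z : ℚ) / (M : ℚ) := by field_simp; linarith [hz]
  have hcast : (x : ℚ_[p]) = ((z : ℤ) : ℚ_[p]) / ((M : ℕ) : ℚ_[p]) := by
    rw [hxq]; push_cast; ring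
  have hpM : ¬ ((p : ℤ) ∣ (M : ℤ)) := by
    intro h
    have := Int.le_of_dvd (by exact_mod_cast hM) h
    omega
  have h2 : ‖((M : ℕ) : ℚ_[p])‖ = 1 := by
    have hc : (((M : ℤ)) : ℚ_[p]) = ((M : ℕ) : ℚ_[p]) := by push_cast; rfl
    rw [← hc]
    exact norm_int_eq_one hpM
  rw [hcast, norm_div, h2, div_one]
  exact Padic.norm_int_le_one z

lemma norm_unit_factor {M : ℕ} (hM : 0 < M) (hMp : M < p) {t : ℕ}
    (hpz : (p : ℤ) = (M : ℤ) * (t : ℤ) + 1)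
    {x : ℚ} {z : ℤ} (hz : (M : ℚ) * x = z) (hz1 : 1 ≤ z) (hzM : z ≤ (M : ℤ))
    {j : ℕ} (hj : j < p - 1) (hne : (j : ℚ) ≠ ((p : ℚ) - 1) * x) :
    ‖(x : ℚ_[p]) + (j : ℚ_[p])‖ = 1 := by
  have hM0 : (M : ℚ) ≠ 0 := by positivity
  -- integer non-divisibility
  have hne' : (j : ℤ) * M ≠ ((p : ℤ) - 1) * z := by
    intro h
    apply hne
    have hq : (j : ℚ) * (M : ℚ) = ((p : ℚ) - 1) * (z : ℚ) := by exact_mod_cast h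
    rw [← hz] at hq
    apply mul_right_cancel₀ hM0
    linear_combination hq
  have hnd : ¬ ((p : ℤ) ∣ z + (j : ℤ) * M) := by
    intro hdvd
    have hp2 : 2 ≤ p := (Fact.out : p.Prime).two_le
    obtain ⟨s, hs⟩ := hdvd
    have hMz : (1 : ℤ) ≤ (M : ℤ) := by exact_mod_cast hM
    have hjz : (j : ℤ) ≤ (p : ℤ) - 2 := by omega
    have hppos : (0 : ℤ) < (p : ℤ) := by positivity
    have hup : z + (j : ℤ) * M ≤ ((p : ℤ) - 1) * M := by nlinarith
    have hlo : (0 : ℤ) < z + (j : ℤ) * M := by positivity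
    have hs1 : 1 ≤ s := by nlinarith
    have hsM : s < (M : ℤ) := by nlinarith
    have hkey : z - s = (M : ℤ) * (s * t - j) := by linear_combination hs + s * hpz
    have hk0 : s * (t : ℤ) - (j : ℤ) = 0 := by
      rcases lt_trichotomy (s * (t : ℤ) - (j : ℤ)) 0 with h | h | h
      · nlinarith
      · exact h
      · nlinarith
    have hzs : z = s := by rw [hk0, mul_zero] at hkey; omega
    exact hne' (by linear_combination hs - (p : ℤ) * hzs)
  -- norm computation
  have hxq : x + (j : ℚ) = ((z + (j : ℤ) * M : ℤ) : ℚ) / (M : ℚ) := by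
    field_simp
    push_cast
    linarith [hz]
  have hcast : (x : ℚ_[p]) + (j : ℚ_[p]) = ((z + (j : ℤ) * M : ℤ) : ℚ_[p]) / ((M : ℕ) : ℚ_[p]) := by
    have := congrArg (fun q : ℚ => (q : ℚ_[p])) hxq
    push_cast at this ⊢
    convert this using 2
  have hpM : ¬ ((p : ℤ) ∣ (M : ℤ)) := by
    intro h
    have := Int.le_of_dvd (by exact_mod_cast hM) h
    omega
  have h2 : ‖((M : ℕ) : ℚ_[p])‖ = 1 := by
    have hc : (((M : ℤ)) : ℚ_[p]) = ((M : ℕ) : ℚ_[p]) := by push_cast; rfl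
    rw [← hc]
    exact norm_int_eq_one hpM
  rw [hcast, norm_div, norm_int_eq_one hnd, h2, div_one]

end TSCAux

set_option maxHeartbeats 2000000 in
open TSCAux in
/-- Let `n ∈ {3,4}`, `0 < r₁ ≤ ⋯ ≤ r_{n−1} < 1` (here `r 0,…,r (n-2)`),
`0 < rₙ < qₙ ≤ 1` with `r₂ < qₙ`.  Let `M` be a common denominator of all parameters, let
`p ≡ 1 (mod M)` be prime, and `k₀ := (p−1)rₙ` (a positive integer).  Then both of the sums
`S₁ = Σ_{i=0}^{k₀} [((1−p)rₙ)_i·(r₁)_i⋯(r_{n−1})_i]/[(qₙ−p·rₙ)_i·(i!)^{n−1}]` and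
`S₂ = Σ_{i=0}^{p−1} [(rₙ)_i·(r₁)_i⋯(r_{n−1})_i]/[(qₙ)_i·(i!)^{n−1}]` are `p`-adic integers,
and `S₁ ≡ S₂ (mod p·ℤ_p)`. -/
theorem truncated_sum_congr (n : ℕ) (hn : n = 3 ∨ n = 4) (r : ℕ → ℚ) (rn qn : ℚ)
    (hr_pos : ∀ i, i < n - 1 → 0 < r i) (hr_lt : ∀ i, i < n - 1 → r i < 1)
    (hr_mono : ∀ i j, i ≤ j → j < n - 1 → r i ≤ r j)
    (hrn0 : 0 < rn) (hrnqn : rn < qn) (hqn1 : qn ≤ 1) (hr2qn : r 1 < qn)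
    (M : ℕ) (hM : 0 < M)
    (hMr : ∀ i, i < n - 1 → ∃ z : ℤ, (M : ℚ) * r i = (z : ℚ))
    (hMrn : ∃ z : ℤ, (M : ℚ) * rn = (z : ℚ)) (hMqn : ∃ z : ℤ, (M : ℚ) * qn = (z : ℚ))
    (p : ℕ) [Fact (Nat.Prime p)] (hpM : p ≡ 1 [MOD M])
    (k0 : ℕ) (hk0 : (k0 : ℚ) = ((p : ℚ) - 1) * rn) :
    ‖(((∑ i ∈ Finset.range (k0 + 1),
          (poch ((1 - (p : ℚ)) * rn) i * ∏ j ∈ Finset.range (n - 1), poch (r j) i) /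
            (poch (qn - (p : ℚ) * rn) i * ((i.factorial : ℚ)) ^ (n - 1)) : ℚ)) : ℚ_[p])‖ ≤ 1 ∧
    ‖(((∑ i ∈ Finset.range p,
          (poch rn i * ∏ j ∈ Finset.range (n - 1), poch (r j) i) /
            (poch qn i * ((i.factorial : ℚ)) ^ (n - 1)) : ℚ)) : ℚ_[p])‖ ≤ 1 ∧
    ∃ c : ℤ_[p],
      (((∑ i ∈ Finset.range (k0 + 1),
            (poch ((1 - (p : ℚ)) * rn) i * ∏ j ∈ Finset.range (n - 1), poch (r j) i) /
              (poch (qn - (p : ℚ) * rn) i * ((i.factorial : ℚ)) ^ (n - 1))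
          - ∑ i ∈ Finset.range p,
              (poch rn i * ∏ j ∈ Finset.range (n - 1), poch (r j) i) /
                (poch qn i * ((i.factorial : ℚ)) ^ (n - 1)) : ℚ)) : ℚ_[p])
        = (p : ℚ_[p]) * (c : ℚ_[p]) := by
  have hp : p.Prime := Fact.out
  have hp2 : 2 ≤ p := hp.two_le
  have h1n : 1 < n - 1 := by rcases hn with h | h <;> omega
  -- arithmetic setup
  have hMdvd : M ∣ p - 1 := (Nat.modEq_iff_dvd' (by omega)).mp hpM.symm
  obtain ⟨t, ht⟩ := hMdvd
  have hMle : M ≤ p - 1 := Nat.le_of_dvd (by omega) ⟨t, ht⟩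
  have hMp : M < p := by omega
  have hpnat : p = M * t + 1 := by rw [← ht]; omega
  have hpz : (p : ℤ) = (M : ℤ) * (t : ℤ) + 1 := by exact_mod_cast hpnat
  have hpq : (p : ℚ) = (M : ℚ) * (t : ℚ) + 1 := by exact_mod_cast hpnat
  have hp2q : (2 : ℚ) ≤ (p : ℚ) := by exact_mod_cast hp2
  have hpq1 : (1 : ℚ) ≤ (p : ℚ) - 1 := by linarith
  have hqn0 : 0 < qn := lt_trans hrn0 hrnqn
  have hr10 : 0 < r 1 := hr_pos 1 h1n
  obtain ⟨zq, hzq⟩ := hMqn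
  obtain ⟨zr, hzr⟩ := hMrn
  obtain ⟨w, hw⟩ := hMr 1 h1n
  have hzq0 : (0 : ℚ) < (zq : ℚ) := by rw [← hzq]; positivity
  have hzq1 : 1 ≤ zq := by
    have h' : (0 : ℤ) < zq := by exact_mod_cast hzq0
    omega
  have hzqM : zq ≤ (M : ℤ) := by
    have h1 : (zq : ℚ) ≤ (M : ℚ) := by rw [← hzq]; nlinarith [hzq, hqn1]
    exact_mod_cast h1
  have hw0 : (0 : ℚ) < (w : ℚ) := by rw [← hw]; positivity
  have hw1 : 0 ≤ w := by
    have h' : (0 : ℤ) < w := by exact_mod_cast hw0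
    omega
  -- b and j1
  set b : ℕ := zq.toNat * t with hbdef
  set j1 : ℕ := w.toNat * t with hj1def
  have hzqcast : ((zq.toNat : ℕ) : ℚ) = (zq : ℚ) := by
    exact_mod_cast congrArg (Int.cast : ℤ → ℚ) (Int.toNat_of_nonneg (by omega : (0:ℤ) ≤ zq))
  have hwcast : ((w.toNat : ℕ) : ℚ) = (w : ℚ) := by
    exact_mod_cast congrArg (Int.cast : ℤ → ℚ) (Int.toNat_of_nonneg hw1)
  have hbq : (b : ℚ) = ((p : ℚ) - 1) * qn := by
    calc (b : ℚ) = ((zq.toNat : ℕ) : ℚ) * (t : ℚ) := by rw [hbdef]; push_cast; ring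
      _ = (zq : ℚ) * (t : ℚ) := by rw [hzqcast]
      _ = ((p : ℚ) - 1) * qn := by rw [← hzq]; linear_combination (-qn) * hpq
  have hj1q : (j1 : ℚ) = ((p : ℚ) - 1) * r 1 := by
    calc (j1 : ℚ) = ((w.toNat : ℕ) : ℚ) * (t : ℚ) := by rw [hj1def]; push_cast; ring
      _ = (w : ℚ) * (t : ℚ) := by rw [hwcast]
      _ = ((p : ℚ) - 1) * r 1 := by rw [← hw]; linear_combination (-(r 1)) * hpq
  have hk0b : k0 < b := by
    have h1 : (k0 : ℚ) < (b : ℚ) := by rw [hk0, hbq]; nlinarith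
    exact_mod_cast h1
  have hb_le : b ≤ p - 1 := by
    have h1 : (b : ℚ) ≤ ((p - 1 : ℕ) : ℚ) := by
      rw [hbq]
      push_cast [Nat.cast_sub (by omega : 1 ≤ p)]
      nlinarith
    exact_mod_cast h1
  have hj1b : j1 < b := by
    have h1 : (j1 : ℚ) < (b : ℚ) := by rw [hj1q, hbq]; nlinarith
    exact_mod_cast h1
  -- norm basics
  have hrn_int : ‖(rn : ℚ_[p])‖ ≤ 1 := norm_rat_le_one hM hMp hzr
  have hqn_int : ‖(qn : ℚ_[p])‖ ≤ 1 := norm_rat_le_one hM hMp hzq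
  have hr1_int : ‖(r 1 : ℚ_[p])‖ ≤ 1 := norm_rat_le_one hM hMp hw
  have hr_int : ∀ j, j < n - 1 → ‖(r j : ℚ_[p])‖ ≤ 1 := by
    intro j hj
    obtain ⟨z, hz⟩ := hMr j hj
    exact norm_rat_le_one hM hMp hz
  have unit_q : ∀ j : ℕ, j < p - 1 → (j : ℚ) ≠ ((p : ℚ) - 1) * qn →
      ‖(qn : ℚ_[p]) + (j : ℚ_[p])‖ = 1 := fun j hj hne =>
    norm_unit_factor hM hMp hpz hzq hzq1 hzqM hj hne
  have hq1 : ‖(qn : ℚ_[p])‖ = 1 := by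
    have h0 : ((0 : ℕ) : ℚ) ≠ ((p : ℚ) - 1) * qn := by
      push_cast
      nlinarith
    have := unit_q 0 (by omega) h0
    simpa using this
  have hε0 : (0 : ℝ) ≤ (p : ℝ)⁻¹ := by positivity
  have hεpos : (0 : ℝ) < (p : ℝ)⁻¹ := by positivity
  have hεlt1 : (p : ℝ)⁻¹ < 1 := by
    have h1 : (1 : ℝ) < (p : ℝ) := by exact_mod_cast hp.one_lt
    exact inv_lt_one_of_one_lt₀ h1
  have hε1 : (p : ℝ)⁻¹ ≤ 1 := hεlt1.le
  have hprn : ‖(((p : ℚ) * rn : ℚ) : ℚ_[p])‖ ≤ (p : ℝ)⁻¹ := by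
    have hc : (((p : ℚ) * rn : ℚ) : ℚ_[p]) = (p : ℚ_[p]) * (rn : ℚ_[p]) := by push_cast; ring
    rw [hc, norm_mul, Padic.norm_p]
    calc (p : ℝ)⁻¹ * ‖(rn : ℚ_[p])‖ ≤ (p : ℝ)⁻¹ * 1 :=
        mul_le_mul_of_nonneg_left hrn_int hε0
      _ = (p : ℝ)⁻¹ := mul_one _
  have hpr1 : ‖(((p : ℚ) * r 1 : ℚ) : ℚ_[p])‖ ≤ (p : ℝ)⁻¹ := by
    have hc : (((p : ℚ) * r 1 : ℚ) : ℚ_[p]) = (p : ℚ_[p]) * (r 1 : ℚ_[p]) := by push_cast; ring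
    rw [hc, norm_mul, Padic.norm_p]
    calc (p : ℝ)⁻¹ * ‖(r 1 : ℚ_[p])‖ ≤ (p : ℝ)⁻¹ * 1 :=
        mul_le_mul_of_nonneg_left hr1_int hε0
      _ = (p : ℝ)⁻¹ := mul_one _
  have hpqn : ‖(((p : ℚ) * qn : ℚ) : ℚ_[p])‖ = (p : ℝ)⁻¹ := by
    have hc : (((p : ℚ) * qn : ℚ) : ℚ_[p]) = (p : ℚ_[p]) * (qn : ℚ_[p]) := by push_cast; ring
    rw [hc, norm_mul, Padic.norm_p, hq1, mul_one]
  -- seeds for congruences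
  have hseed1 : ‖(((1 - (p : ℚ)) * rn - rn : ℚ) : ℚ_[p])‖ ≤ (p : ℝ)⁻¹ := by
    have he : ((1 - (p : ℚ)) * rn - rn : ℚ) = -((p : ℚ) * rn) := by ring
    rw [he, Rat.cast_neg, norm_neg]
    exact hprn
  have hseed2 : ‖((qn - (p : ℚ) * rn - qn : ℚ) : ℚ_[p])‖ ≤ (p : ℝ)⁻¹ := by
    have he : (qn - (p : ℚ) * rn - qn : ℚ) = -((p : ℚ) * rn) := by ring
    rw [he, Rat.cast_neg, norm_neg]
    exact hprn
  have ha1_int : ‖(((1 - (p : ℚ)) * rn : ℚ) : ℚ_[p])‖ ≤ 1 := by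
    have he : ((1 - (p : ℚ)) * rn : ℚ) = rn - (p : ℚ) * rn := by ring
    rw [he, Rat.cast_sub]
    exact le_trans (norm_sub_le_max _ _) (max_le hrn_int (le_trans hprn hε1))
  have hd1_int : ‖((qn - (p : ℚ) * rn : ℚ) : ℚ_[p])‖ ≤ 1 := by
    rw [Rat.cast_sub]
    exact le_trans (norm_sub_le_max _ _) (max_le hqn_int (le_trans hprn hε1))
  -- key factors
  have hrnk0 : ‖(rn : ℚ_[p]) + (k0 : ℚ_[p])‖ ≤ (p : ℝ)⁻¹ := by
    have he : (rn : ℚ_[p]) + (k0 : ℚ_[p]) = (((p : ℚ) * rn : ℚ) : ℚ_[p]) := by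
      have h2 : (rn + (k0 : ℚ) : ℚ) = ((p : ℚ) * rn) := by rw [hk0]; ring
      rw [← h2]; push_cast; ring
    rw [he]; exact hprn
  have hr1j1 : ‖(r 1 : ℚ_[p]) + (j1 : ℚ_[p])‖ ≤ (p : ℝ)⁻¹ := by
    have he : (r 1 : ℚ_[p]) + (j1 : ℚ_[p]) = (((p : ℚ) * r 1 : ℚ) : ℚ_[p]) := by
      have h2 : (r 1 + (j1 : ℚ) : ℚ) = ((p : ℚ) * r 1) := by rw [hj1q]; ring
      rw [← h2]; push_cast; ring
    rw [he]; exact hpr1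
  have hqnb : ‖(qn : ℚ_[p]) + (b : ℚ_[p])‖ = (p : ℝ)⁻¹ := by
    have he : (qn : ℚ_[p]) + (b : ℚ_[p]) = (((p : ℚ) * qn : ℚ) : ℚ_[p]) := by
      have h2 : (qn + (b : ℚ) : ℚ) = ((p : ℚ) * qn) := by rw [hbq]; ring
      rw [← h2]; push_cast; ring
    rw [he]; exact hpqn
  -- factorial norms
  have hfact : ∀ i : ℕ, i < p → ‖((((i.factorial : ℚ)) ^ (n - 1) : ℚ) : ℚ_[p])‖ = 1 := by
    intro i hi
    have hnd : ¬ ((p : ℤ) ∣ ((i.factorial : ℕ) : ℤ)) := by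
      rw [Int.natCast_dvd_natCast]
      intro h
      have := (Nat.Prime.dvd_factorial hp).mp h
      omega
    have hc : ((((i.factorial : ℚ)) ^ (n - 1) : ℚ) : ℚ_[p])
        = (((i.factorial : ℕ) : ℤ) : ℚ_[p]) ^ (n - 1) := by push_cast; ring
    rw [hc, norm_pow, norm_int_eq_one hnd, one_pow]
  -- product of r-pochhammers
  have hP_int : ∀ i : ℕ, ‖(((∏ j ∈ Finset.range (n - 1), poch (r j) i) : ℚ) : ℚ_[p])‖ ≤ 1 := by
    intro i
    have hc : (((∏ j ∈ Finset.range (n - 1), poch (r j) i) : ℚ) : ℚ_[p])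
        = ∏ j ∈ Finset.range (n - 1), ((poch (r j) i : ℚ) : ℚ_[p]) := by push_cast; rfl
    rw [hc]
    exact norm_prod_le_one _ _ (fun j hj => norm_poch_le_one (hr_int j (Finset.mem_range.mp hj)) i)
  have hP_small : ∀ i : ℕ, b < i →
      ‖(((∏ j ∈ Finset.range (n - 1), poch (r j) i) : ℚ) : ℚ_[p])‖ ≤ (p : ℝ)⁻¹ := by
    intro i hbi
    have hc : (((∏ j ∈ Finset.range (n - 1), poch (r j) i) : ℚ) : ℚ_[p])
        = ∏ j ∈ Finset.range (n - 1), ((poch (r j) i : ℚ) : ℚ_[p]) := by push_cast; rfl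
    rw [hc]
    refine norm_prod_le_of_mem (Finset.mem_range.mpr h1n)
      (fun j hj => norm_poch_le_one (hr_int j (Finset.mem_range.mp hj)) i) ?_
    exact norm_poch_le_of_factor hr1_int (show j1 < i by omega) hr1j1
  -- qn pochhammer norms
  have hq_one : ∀ i : ℕ, i ≤ b → ‖((poch qn i : ℚ) : ℚ_[p])‖ = 1 := by
    intro i hib
    refine norm_poch_eq_one (fun j hj => unit_q j (by omega) ?_)
    rw [← hbq]
    exact_mod_cast (show j ≠ b by omega)
  have hq_val : ∀ i : ℕ, b < i → i < p → ‖((poch qn i : ℚ) : ℚ_[p])‖ = (p : ℝ)⁻¹ := by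
    intro i hbi hip
    rw [poch_cast, norm_prod]
    rw [Finset.prod_eq_single b
      (fun j hj hne => unit_q j (by
          have := Finset.mem_range.mp hj; omega)
        (by rw [← hbq]; exact_mod_cast hne))
      (fun hb => absurd (Finset.mem_range.mpr hbi) hb)]
    exact hqnb
  have hrn_small : ∀ i : ℕ, k0 < i → ‖((poch rn i : ℚ) : ℚ_[p])‖ ≤ (p : ℝ)⁻¹ :=
    fun i hi => norm_poch_le_of_factor hrn_int hi hrnk0
  -- term-by-term facts
  have hmain : ∀ i : ℕ, i ≤ k0 →
      ‖(((poch ((1 - (p : ℚ)) * rn) i * (∏ j ∈ Finset.range (n - 1), poch (r j) i)) /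
          (poch (qn - (p : ℚ) * rn) i * ((i.factorial : ℚ)) ^ (n - 1)) : ℚ) : ℚ_[p])‖ ≤ 1 ∧
      ‖(((poch ((1 - (p : ℚ)) * rn) i * (∏ j ∈ Finset.range (n - 1), poch (r j) i)) /
          (poch (qn - (p : ℚ) * rn) i * ((i.factorial : ℚ)) ^ (n - 1))
        - (poch rn i * (∏ j ∈ Finset.range (n - 1), poch (r j) i)) /
          (poch qn i * ((i.factorial : ℚ)) ^ (n - 1)) : ℚ) : ℚ_[p])‖ ≤ (p : ℝ)⁻¹ := by
    intro i hik
    have hip : i < p := by omega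
    have hib : i ≤ b := by omega
    have hB2 : ‖((poch qn i * ((i.factorial : ℚ)) ^ (n - 1) : ℚ) : ℚ_[p])‖ = 1 := by
      rw [Rat.cast_mul, norm_mul, hq_one i hib, hfact i hip, one_mul]
    have hB12 : ‖((poch (qn - (p : ℚ) * rn) i * ((i.factorial : ℚ)) ^ (n - 1)
        - poch qn i * ((i.factorial : ℚ)) ^ (n - 1) : ℚ) : ℚ_[p])‖ ≤ (p : ℝ)⁻¹ := by
      have he : (poch (qn - (p : ℚ) * rn) i * ((i.factorial : ℚ)) ^ (n - 1)
          - poch qn i * ((i.factorial : ℚ)) ^ (n - 1) : ℚ)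
          = (poch (qn - (p : ℚ) * rn) i - poch qn i) * ((i.factorial : ℚ)) ^ (n - 1) := by ring
      rw [he, Rat.cast_mul, norm_mul, hfact i hip, mul_one]
      exact le_trans (norm_poch_sub_le hd1_int hqn_int i) hseed2
    have hB1 : ‖((poch (qn - (p : ℚ) * rn) i * ((i.factorial : ℚ)) ^ (n - 1) : ℚ) : ℚ_[p])‖ = 1 := by
      rw [← hB2]
      apply norm_eq_of_sub_lt
      have hc : ((poch (qn - (p : ℚ) * rn) i * ((i.factorial : ℚ)) ^ (n - 1) : ℚ) : ℚ_[p])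
          - ((poch qn i * ((i.factorial : ℚ)) ^ (n - 1) : ℚ) : ℚ_[p])
          = ((poch (qn - (p : ℚ) * rn) i * ((i.factorial : ℚ)) ^ (n - 1)
            - poch qn i * ((i.factorial : ℚ)) ^ (n - 1) : ℚ) : ℚ_[p]) := by push_cast; ring
      rw [hc, hB2]
      exact lt_of_le_of_lt hB12 hεlt1
    have hB1ne : (poch (qn - (p : ℚ) * rn) i * ((i.factorial : ℚ)) ^ (n - 1) : ℚ) ≠ 0 := by
      intro h0
      rw [h0] at hB1
      simp at hB1
    have hB2ne : (poch qn i * ((i.factorial : ℚ)) ^ (n - 1) : ℚ) ≠ 0 := by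
      intro h0
      rw [h0] at hB2
      simp at hB2
    have hA1_int : ‖((poch ((1 - (p : ℚ)) * rn) i * (∏ j ∈ Finset.range (n - 1), poch (r j) i) : ℚ) : ℚ_[p])‖ ≤ 1 := by
      rw [Rat.cast_mul, norm_mul]
      exact mul_le_one₀ (norm_poch_le_one ha1_int i) (norm_nonneg _) (hP_int i)
    have hA2_int : ‖((poch rn i * (∏ j ∈ Finset.range (n - 1), poch (r j) i) : ℚ) : ℚ_[p])‖ ≤ 1 := by
      rw [Rat.cast_mul, norm_mul]
      exact mul_le_one₀ (norm_poch_le_one hrn_int i) (norm_nonneg _) (hP_int i)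
    have hA12 : ‖((poch ((1 - (p : ℚ)) * rn) i * (∏ j ∈ Finset.range (n - 1), poch (r j) i)
        - poch rn i * (∏ j ∈ Finset.range (n - 1), poch (r j) i) : ℚ) : ℚ_[p])‖ ≤ (p : ℝ)⁻¹ := by
      have he : (poch ((1 - (p : ℚ)) * rn) i * (∏ j ∈ Finset.range (n - 1), poch (r j) i)
          - poch rn i * (∏ j ∈ Finset.range (n - 1), poch (r j) i) : ℚ)
          = (poch ((1 - (p : ℚ)) * rn) i - poch rn i) * (∏ j ∈ Finset.range (n - 1), poch (r j) i) := by
        ring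
      rw [he, Rat.cast_mul, norm_mul]
      calc ‖((poch ((1 - (p : ℚ)) * rn) i - poch rn i : ℚ) : ℚ_[p])‖ *
            ‖(((∏ j ∈ Finset.range (n - 1), poch (r j) i) : ℚ) : ℚ_[p])‖
          ≤ (p : ℝ)⁻¹ * 1 :=
            mul_le_mul (le_trans (norm_poch_sub_le ha1_int hrn_int i) hseed1) (hP_int i)
              (norm_nonneg _) hε0
        _ = (p : ℝ)⁻¹ := mul_one _
    constructor
    · rw [Rat.cast_div, norm_div, hB1, div_one]
      exact hA1_int
    · rw [div_sub_div _ _ hB1ne hB2ne, Rat.cast_div, norm_div]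
      have hden : ‖(((poch (qn - (p : ℚ) * rn) i * ((i.factorial : ℚ)) ^ (n - 1)) *
          (poch qn i * ((i.factorial : ℚ)) ^ (n - 1)) : ℚ) : ℚ_[p])‖ = 1 := by
        rw [Rat.cast_mul, norm_mul, hB1, hB2, one_mul]
      rw [hden, div_one]
      have hnum : (poch ((1 - (p : ℚ)) * rn) i * (∏ j ∈ Finset.range (n - 1), poch (r j) i) *
            (poch qn i * ((i.factorial : ℚ)) ^ (n - 1)) -
          poch (qn - (p : ℚ) * rn) i * ((i.factorial : ℚ)) ^ (n - 1) *
            (poch rn i * (∏ j ∈ Finset.range (n - 1), poch (r j) i)) : ℚ)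
          = (poch ((1 - (p : ℚ)) * rn) i * (∏ j ∈ Finset.range (n - 1), poch (r j) i)
              - poch rn i * (∏ j ∈ Finset.range (n - 1), poch (r j) i)) *
              (poch qn i * ((i.factorial : ℚ)) ^ (n - 1))
            + (poch qn i * ((i.factorial : ℚ)) ^ (n - 1)
              - poch (qn - (p : ℚ) * rn) i * ((i.factorial : ℚ)) ^ (n - 1)) *
              (poch rn i * (∏ j ∈ Finset.range (n - 1), poch (r j) i)) := by ring
      rw [hnum, Rat.cast_add]
      refine le_trans (Padic.nonarchimedean _ _) (max_le ?_ ?_)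
      · rw [Rat.cast_mul, norm_mul]
        calc _ ≤ (p : ℝ)⁻¹ * 1 := mul_le_mul hA12 (le_of_eq hB2) (norm_nonneg _) hε0
          _ = (p : ℝ)⁻¹ := mul_one _
      · rw [Rat.cast_mul, norm_mul]
        have hBneg : ‖((poch qn i * ((i.factorial : ℚ)) ^ (n - 1)
            - poch (qn - (p : ℚ) * rn) i * ((i.factorial : ℚ)) ^ (n - 1) : ℚ) : ℚ_[p])‖ ≤ (p : ℝ)⁻¹ := by
          have he : (poch qn i * ((i.factorial : ℚ)) ^ (n - 1)
              - poch (qn - (p : ℚ) * rn) i * ((i.factorial : ℚ)) ^ (n - 1) : ℚ)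
              = -(poch (qn - (p : ℚ) * rn) i * ((i.factorial : ℚ)) ^ (n - 1)
                - poch qn i * ((i.factorial : ℚ)) ^ (n - 1)) := by ring
          rw [he, Rat.cast_neg, norm_neg]
          exact hB12
        calc _ ≤ (p : ℝ)⁻¹ * 1 := mul_le_mul hBneg hA2_int (norm_nonneg _) hε0
          _ = (p : ℝ)⁻¹ := mul_one _
  have hf2 : ∀ i : ℕ, i < p →
      ‖(((poch rn i * (∏ j ∈ Finset.range (n - 1), poch (r j) i)) /
          (poch qn i * ((i.factorial : ℚ)) ^ (n - 1)) : ℚ) : ℚ_[p])‖ ≤ 1 ∧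
      (k0 < i → ‖(((poch rn i * (∏ j ∈ Finset.range (n - 1), poch (r j) i)) /
          (poch qn i * ((i.factorial : ℚ)) ^ (n - 1)) : ℚ) : ℚ_[p])‖ ≤ (p : ℝ)⁻¹) := by
    intro i hip
    rcases le_or_gt i b with hib | hbi
    · have hB2 : ‖((poch qn i * ((i.factorial : ℚ)) ^ (n - 1) : ℚ) : ℚ_[p])‖ = 1 := by
        rw [Rat.cast_mul, norm_mul, hq_one i hib, hfact i hip, one_mul]
      rw [Rat.cast_div, norm_div, hB2, div_one]
      constructor
      · rw [Rat.cast_mul, norm_mul]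
        exact mul_le_one₀ (norm_poch_le_one hrn_int i) (norm_nonneg _) (hP_int i)
      · intro hk0i
        rw [Rat.cast_mul, norm_mul]
        calc _ ≤ (p : ℝ)⁻¹ * 1 :=
            mul_le_mul (hrn_small i hk0i) (hP_int i) (norm_nonneg _) hε0
          _ = (p : ℝ)⁻¹ := mul_one _
    · have hk0i : k0 < i := by omega
      have hB2 : ‖((poch qn i * ((i.factorial : ℚ)) ^ (n - 1) : ℚ) : ℚ_[p])‖ = (p : ℝ)⁻¹ := by
        rw [Rat.cast_mul, norm_mul, hq_val i hbi hip, hfact i hip, mul_one]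
      have hA2 : ‖((poch rn i * (∏ j ∈ Finset.range (n - 1), poch (r j) i) : ℚ) : ℚ_[p])‖
          ≤ (p : ℝ)⁻¹ * (p : ℝ)⁻¹ := by
        rw [Rat.cast_mul, norm_mul]
        exact mul_le_mul (hrn_small i hk0i) (hP_small i hbi) (norm_nonneg _) hε0
      have hle : ‖(((poch rn i * (∏ j ∈ Finset.range (n - 1), poch (r j) i)) /
          (poch qn i * ((i.factorial : ℚ)) ^ (n - 1)) : ℚ) : ℚ_[p])‖ ≤ (p : ℝ)⁻¹ := by
        rw [Rat.cast_div, norm_div, hB2, div_le_iff₀ hεpos]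
        exact hA2
      exact ⟨le_trans hle hε1, fun _ => hle⟩
  have hk1p : k0 + 1 ≤ p := by omega
  refine ⟨?_, ?_, ?_⟩
  · have hc1 : ((∑ i ∈ Finset.range (k0 + 1),
          (poch ((1 - (p : ℚ)) * rn) i * (∏ j ∈ Finset.range (n - 1), poch (r j) i)) /
            (poch (qn - (p : ℚ) * rn) i * ((i.factorial : ℚ)) ^ (n - 1)) : ℚ) : ℚ_[p])
        = ∑ i ∈ Finset.range (k0 + 1),
          (((poch ((1 - (p : ℚ)) * rn) i * (∏ j ∈ Finset.range (n - 1), poch (r j) i)) /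
            (poch (qn - (p : ℚ) * rn) i * ((i.factorial : ℚ)) ^ (n - 1)) : ℚ) : ℚ_[p]) := by
      push_cast
      rfl
    rw [hc1]
    exact norm_sum_le_of_le zero_le_one _ _
      (fun i hi => (hmain i (by have := Finset.mem_range.mp hi; omega)).1)
  · have hc2 : ((∑ i ∈ Finset.range p,
          (poch rn i * (∏ j ∈ Finset.range (n - 1), poch (r j) i)) /
            (poch qn i * ((i.factorial : ℚ)) ^ (n - 1)) : ℚ) : ℚ_[p])
        = ∑ i ∈ Finset.range p,
          (((poch rn i * (∏ j ∈ Finset.range (n - 1), poch (r j) i)) /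
            (poch qn i * ((i.factorial : ℚ)) ^ (n - 1)) : ℚ) : ℚ_[p]) := by
      push_cast
      rfl
    rw [hc2]
    exact norm_sum_le_of_le zero_le_one _ _
      (fun i hi => (hf2 i (Finset.mem_range.mp hi)).1)
  · -- the difference
    have hXq : (∑ i ∈ Finset.range (k0 + 1),
          (poch ((1 - (p : ℚ)) * rn) i * (∏ j ∈ Finset.range (n - 1), poch (r j) i)) /
            (poch (qn - (p : ℚ) * rn) i * ((i.factorial : ℚ)) ^ (n - 1))
        - ∑ i ∈ Finset.range p,
            (poch rn i * (∏ j ∈ Finset.range (n - 1), poch (r j) i)) /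
              (poch qn i * ((i.factorial : ℚ)) ^ (n - 1)) : ℚ)
        = (∑ i ∈ Finset.range (k0 + 1),
            ((poch ((1 - (p : ℚ)) * rn) i * (∏ j ∈ Finset.range (n - 1), poch (r j) i)) /
              (poch (qn - (p : ℚ) * rn) i * ((i.factorial : ℚ)) ^ (n - 1))
            - (poch rn i * (∏ j ∈ Finset.range (n - 1), poch (r j) i)) /
              (poch qn i * ((i.factorial : ℚ)) ^ (n - 1))))
          - ∑ i ∈ Finset.Ico (k0 + 1) p,
              (poch rn i * (∏ j ∈ Finset.range (n - 1), poch (r j) i)) /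
                (poch qn i * ((i.factorial : ℚ)) ^ (n - 1)) := by
      rw [← Finset.sum_range_add_sum_Ico
        (fun i => (poch rn i * (∏ j ∈ Finset.range (n - 1), poch (r j) i)) /
          (poch qn i * ((i.factorial : ℚ)) ^ (n - 1))) hk1p,
        Finset.sum_sub_distrib]
      ring
    have hXnorm : ‖((∑ i ∈ Finset.range (k0 + 1),
          (poch ((1 - (p : ℚ)) * rn) i * (∏ j ∈ Finset.range (n - 1), poch (r j) i)) /
            (poch (qn - (p : ℚ) * rn) i * ((i.factorial : ℚ)) ^ (n - 1))
        - ∑ i ∈ Finset.range p,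
            (poch rn i * (∏ j ∈ Finset.range (n - 1), poch (r j) i)) /
              (poch qn i * ((i.factorial : ℚ)) ^ (n - 1)) : ℚ) : ℚ_[p])‖ ≤ (p : ℝ)⁻¹ := by
      rw [hXq]
      have hc3 : (((∑ i ∈ Finset.range (k0 + 1),
            ((poch ((1 - (p : ℚ)) * rn) i * (∏ j ∈ Finset.range (n - 1), poch (r j) i)) /
              (poch (qn - (p : ℚ) * rn) i * ((i.factorial : ℚ)) ^ (n - 1))
            - (poch rn i * (∏ j ∈ Finset.range (n - 1), poch (r j) i)) /
              (poch qn i * ((i.factorial : ℚ)) ^ (n - 1))))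
          - ∑ i ∈ Finset.Ico (k0 + 1) p,
              (poch rn i * (∏ j ∈ Finset.range (n - 1), poch (r j) i)) /
                (poch qn i * ((i.factorial : ℚ)) ^ (n - 1)) : ℚ) : ℚ_[p])
          = (∑ i ∈ Finset.range (k0 + 1),
            (((poch ((1 - (p : ℚ)) * rn) i * (∏ j ∈ Finset.range (n - 1), poch (r j) i)) /
              (poch (qn - (p : ℚ) * rn) i * ((i.factorial : ℚ)) ^ (n - 1))
            - (poch rn i * (∏ j ∈ Finset.range (n - 1), poch (r j) i)) /
              (poch qn i * ((i.factorial : ℚ)) ^ (n - 1)) : ℚ) : ℚ_[p]))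
          - ∑ i ∈ Finset.Ico (k0 + 1) p,
              (((poch rn i * (∏ j ∈ Finset.range (n - 1), poch (r j) i)) /
                (poch qn i * ((i.factorial : ℚ)) ^ (n - 1)) : ℚ) : ℚ_[p]) := by
        push_cast
        rfl
      rw [hc3]
      refine le_trans (norm_sub_le_max _ _) (max_le ?_ ?_)
      · exact norm_sum_le_of_le hε0 _ _ (fun i hi => (hmain i (by
          have := Finset.mem_range.mp hi; omega)).2)
      · refine norm_sum_le_of_le hε0 _ _ (fun i hi => ?_)
        have hmem := Finset.mem_Ico.mp hi
        exact (hf2 i hmem.2).2 (by omega)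
    have hpne : (p : ℚ_[p]) ≠ 0 := by
      exact_mod_cast Nat.cast_ne_zero.mpr hp.pos.ne'
    refine ⟨⟨((∑ i ∈ Finset.range (k0 + 1),
          (poch ((1 - (p : ℚ)) * rn) i * (∏ j ∈ Finset.range (n - 1), poch (r j) i)) /
            (poch (qn - (p : ℚ) * rn) i * ((i.factorial : ℚ)) ^ (n - 1))
        - ∑ i ∈ Finset.range p,
            (poch rn i * (∏ j ∈ Finset.range (n - 1), poch (r j) i)) /
              (poch qn i * ((i.factorial : ℚ)) ^ (n - 1)) : ℚ) : ℚ_[p]) / (p : ℚ_[p]), ?_⟩, ?_⟩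
    · rw [norm_div, Padic.norm_p, div_le_one hεpos]
      exact hXnorm
    · exact ((mul_comm _ _).trans (div_mul_cancel₀ _ hpne)).symm
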